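/- arXiv:1606.01985 — 2 statements merged into one kernel-verified Lean document; each statement's English description precedes it below -/
import Mathlib

section
/- Key converse inequality for the two-way channel: for any (n, M1, M2) code for the additive-noise two-way channel in which the noise vector Z2^n is independent of (W1, W2, Z1^n), one has H(W1 | W2) − H(W1 | W2, Y2^n) ≤ n log q − H(Z2^n); symmetrically, if Z1^n is independent of (W1, W2, Z2^n), then H(W2 | W1) − H(W2 | W1, Y1^n) ≤ n log q − H(Z1^n). -/
open MeasureTheory ProbabilityTheory Real Filter Topology
open scoped ENNReal

noncomputable section

/-- Shannon entropy (in the same base as `Real.log`) of a finitely-valued random variable. -/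
def Hent {Ω S : Type*} [MeasurableSpace Ω] [Fintype S] (μ : Measure Ω) (X : Ω → S) : ℝ :=
  ∑ s : S, Real.negMulLog ((μ (X ⁻¹' {s})).toReal)

/-- Conditional Shannon entropy H(X | Y) = H(X, Y) − H(Y). -/
def Hcond {Ω S T : Type*} [MeasurableSpace Ω] [Fintype S] [Fintype T]
    (μ : Measure Ω) (X : Ω → S) (Y : Ω → T) : ℝ :=
  Hent μ (fun ω => (X ω, Y ω)) - Hent μ Y

/-- An (n, M1, M2) code for the two-way channel. -/
structure TWCode (q n M1 M2 : ℕ) where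
  f1 : Fin M1 → (i : Fin n) → (Fin i.1 → ZMod q) → ZMod q
  f2 : Fin M2 → (i : Fin n) → (Fin i.1 → ZMod q) → ZMod q
  g1 : Fin M1 → (Fin n → ZMod q) → Fin M2
  g2 : Fin M2 → (Fin n → ZMod q) → Fin M1

/-- The pair of channel inputs (X_{1,i}, X_{2,i}) produced by the adaptive encoders,
where Y_{1,j} = X_{1,j} + X_{2,j} + Z_{1,j} and Y_{2,j} = X_{1,j} + X_{2,j} + Z_{2,j}
(addition mod q). -/
def TWX {q n M1 M2 : ℕ} (C : TWCode q n M1 M2) (w1 : Fin M1) (w2 : Fin M2)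
    (z1 z2 : Fin n → ZMod q) : (i : Fin n) → ZMod q × ZMod q
  | i =>
    (C.f1 w1 i (fun j =>
        have h : j.1 < n := j.2.trans i.2
        (TWX C w1 w2 z1 z2 ⟨j.1, h⟩).1 + (TWX C w1 w2 z1 z2 ⟨j.1, h⟩).2 + z1 ⟨j.1, h⟩),
     C.f2 w2 i (fun j =>
        have h : j.1 < n := j.2.trans i.2
        (TWX C w1 w2 z1 z2 ⟨j.1, h⟩).1 + (TWX C w1 w2 z1 z2 ⟨j.1, h⟩).2 + z2 ⟨j.1, h⟩))
  termination_by i => i.1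
  decreasing_by all_goals exact j.2

/-- Output sequence Y_1^n at user 1. -/
def TWY1 {q n M1 M2 : ℕ} (C : TWCode q n M1 M2) (w1 : Fin M1) (w2 : Fin M2)
    (z1 z2 : Fin n → ZMod q) (i : Fin n) : ZMod q :=
  (TWX C w1 w2 z1 z2 i).1 + (TWX C w1 w2 z1 z2 i).2 + z1 i

/-- Output sequence Y_2^n at user 2. -/
def TWY2 {q n M1 M2 : ℕ} (C : TWCode q n M1 M2) (w1 : Fin M1) (w2 : Fin M2)
    (z1 z2 : Fin n → ZMod q) (i : Fin n) : ZMod q :=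
  (TWX C w1 w2 z1 z2 i).1 + (TWX C w1 w2 z1 z2 i).2 + z2 i

set_option linter.unusedSectionVars false

lemma real_submodular {S T U : Type*} [Fintype S] [Fintype T] [Fintype U]
    (p : S → T → U → ℝ) (hp : ∀ s t u, 0 ≤ p s t u)
    (hsum : ∑ t : T, ∑ s : S, ∑ u : U, p s t u = 1) :
    (∑ s : S, ∑ t : T, ∑ u : U, Real.negMulLog (p s t u))
      + ∑ t : T, Real.negMulLog (∑ s : S, ∑ u : U, p s t u)
      ≤ (∑ s : S, ∑ t : T, Real.negMulLog (∑ u : U, p s t u))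
        + ∑ t : T, ∑ u : U, Real.negMulLog (∑ s : S, p s t u) := by
  classical
  set pAB : S → T → ℝ := fun s t => ∑ u : U, p s t u with hpAB
  set pBC : T → U → ℝ := fun t u => ∑ s : S, p s t u with hpBC
  set pB : T → ℝ := fun t => ∑ s : S, ∑ u : U, p s t u with hpB
  have hpABnn : ∀ s t, 0 ≤ pAB s t := fun s t => Finset.sum_nonneg fun u _ => hp s t u
  have hpBCnn : ∀ t u, 0 ≤ pBC t u := fun t u => Finset.sum_nonneg fun s _ => hp s t u
  have hpBnn : ∀ t, 0 ≤ pB t := fun t =>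
    Finset.sum_nonneg fun s _ => Finset.sum_nonneg fun u _ => hp s t u
  have hle_AB : ∀ s t u, p s t u ≤ pAB s t := fun s t u =>
    Finset.single_le_sum (fun u _ => hp s t u) (Finset.mem_univ u)
  have hle_BC : ∀ s t u, p s t u ≤ pBC t u := fun s t u =>
    Finset.single_le_sum (fun s _ => hp s t u) (Finset.mem_univ s)
  have hAB_le_B : ∀ s t, pAB s t ≤ pB t := fun s t =>
    Finset.single_le_sum (f := fun s => ∑ u : U, p s t u)
      (fun s _ => Finset.sum_nonneg fun u _ => hp s t u) (Finset.mem_univ s)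
  have hBC_sum : ∀ t, ∑ u : U, pBC t u = pB t := fun t => Finset.sum_comm
  -- pointwise bound
  have hpoint : ∀ s t u,
      p s t u * (Real.log (pAB s t) + Real.log (pBC t u)
        - Real.log (p s t u) - Real.log (pB t))
      ≤ pAB s t * pBC t u / pB t - p s t u := by
    intro s t u
    rcases eq_or_lt_of_le (hp s t u) with h0 | h0
    · rw [← h0]
      simp only [zero_mul, sub_zero]
      exact div_nonneg (mul_nonneg (hpABnn s t) (hpBCnn t u)) (hpBnn t)
    · have hAB : 0 < pAB s t := lt_of_lt_of_le h0 (hle_AB s t u)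
      have hBC : 0 < pBC t u := lt_of_lt_of_le h0 (hle_BC s t u)
      have hB : 0 < pB t := lt_of_lt_of_le hAB (hAB_le_B s t)
      have hratio : 0 < pAB s t * pBC t u / (p s t u * pB t) := by positivity
      have hlog : Real.log (pAB s t) + Real.log (pBC t u)
          - Real.log (p s t u) - Real.log (pB t)
          = Real.log (pAB s t * pBC t u / (p s t u * pB t)) := by
        rw [Real.log_div (by positivity) (by positivity),
          Real.log_mul (ne_of_gt hAB) (ne_of_gt hBC),
          Real.log_mul (ne_of_gt h0) (ne_of_gt hB)]
        ring
      rw [hlog]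
      have := Real.log_le_sub_one_of_pos hratio
      have h2 := mul_le_mul_of_nonneg_left this (le_of_lt h0)
      refine h2.trans_eq ?_
      field_simp
  -- sum of RHS equals zero
  have hRHS : ∑ s : S, ∑ t : T, ∑ u : U, (pAB s t * pBC t u / pB t - p s t u) = 0 := by
    have h1 : ∀ t : T, ∑ s : S, ∑ u : U, pAB s t * pBC t u / pB t = pB t := by
      intro t
      rcases eq_or_lt_of_le (hpBnn t) with hB0 | hB0
      · have hz : ∀ s, pAB s t = 0 := by
          intro s
          linarith [hAB_le_B s t, hpABnn s t]
        simp only [hz, zero_mul, zero_div]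
        simp only [Finset.sum_const_zero]
        linarith
      · have hrow : ∀ s : S, ∑ u : U, pAB s t * pBC t u / pB t = pAB s t * pB t / pB t := by
          intro s
          rw [← hBC_sum t, Finset.mul_sum, Finset.sum_div]
        simp_rw [hrow, mul_div_assoc, div_self (ne_of_gt hB0), mul_one]
        rfl
    have e1 : ∑ s : S, ∑ t : T, ∑ u : U, (pAB s t * pBC t u / pB t - p s t u)
        = (∑ s : S, ∑ t : T, ∑ u : U, pAB s t * pBC t u / pB t)
          - ∑ s : S, ∑ t : T, ∑ u : U, p s t u := by
      simp_rw [Finset.sum_sub_distrib]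
    have e2 : ∑ s : S, ∑ t : T, ∑ u : U, pAB s t * pBC t u / pB t = 1 := by
      rw [Finset.sum_comm]
      simp_rw [h1]
      exact hsum
    have e3 : ∑ s : S, ∑ t : T, ∑ u : U, p s t u = 1 := by
      rw [Finset.sum_comm]
      exact hsum
    rw [e1, e2, e3, sub_self]
  -- expand the four entropy sums into triple sums
  have hL : (∑ s : S, ∑ t : T, ∑ u : U, Real.negMulLog (p s t u))
        + ∑ t : T, Real.negMulLog (pB t)
      = ∑ s : S, ∑ t : T, ∑ u : U,
          (Real.negMulLog (p s t u) + (- p s t u * Real.log (pB t))) := by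
    simp_rw [Finset.sum_add_distrib]
    congr 1
    rw [Finset.sum_comm]
    refine Finset.sum_congr rfl fun t _ => ?_
    simp_rw [← Finset.sum_mul, Finset.sum_neg_distrib]
    rw [Real.negMulLog]
  have hR : (∑ s : S, ∑ t : T, Real.negMulLog (pAB s t))
        + ∑ t : T, ∑ u : U, Real.negMulLog (pBC t u)
      = ∑ s : S, ∑ t : T, ∑ u : U,
          ((- p s t u * Real.log (pAB s t)) + (- p s t u * Real.log (pBC t u))) := by
    simp_rw [Finset.sum_add_distrib]
    congr 1
    · refine Finset.sum_congr rfl fun s _ => Finset.sum_congr rfl fun t _ => ?_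
      simp_rw [← Finset.sum_mul, Finset.sum_neg_distrib]
      rw [Real.negMulLog]
    · have hcell : ∀ (t : T) (u : U), Real.negMulLog (pBC t u)
          = ∑ s : S, (- p s t u * Real.log (pBC t u)) := by
        intro t u
        simp_rw [← Finset.sum_mul, Finset.sum_neg_distrib]
        rw [Real.negMulLog]
      simp_rw [hcell]
      exact (Finset.sum_comm.trans (Finset.sum_congr rfl fun t _ => Finset.sum_comm)).symm
  have hLR : ∀ (s : S) (t : T) (u : U),
      Real.negMulLog (p s t u) + (- p s t u * Real.log (pB t))
        ≤ (- p s t u * Real.log (pAB s t)) + (- p s t u * Real.log (pBC t u))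
          + (pAB s t * pBC t u / pB t - p s t u) := by
    intro s t u
    have hid : p s t u * (Real.log (pAB s t) + Real.log (pBC t u)
          - Real.log (p s t u) - Real.log (pB t))
        = ((- p s t u * Real.log (p s t u)) + (- p s t u * Real.log (pB t)))
          - ((- p s t u * Real.log (pAB s t)) + (- p s t u * Real.log (pBC t u))) := by
      ring
    have := hpoint s t u
    rw [Real.negMulLog]
    linarith
  calc (∑ s : S, ∑ t : T, ∑ u : U, Real.negMulLog (p s t u))
        + ∑ t : T, Real.negMulLog (pB t)
      = ∑ s : S, ∑ t : T, ∑ u : U,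
          (Real.negMulLog (p s t u) + (- p s t u * Real.log (pB t))) := hL
    _ ≤ ∑ s : S, ∑ t : T, ∑ u : U,
          ((- p s t u * Real.log (pAB s t)) + (- p s t u * Real.log (pBC t u))
            + (pAB s t * pBC t u / pB t - p s t u)) :=
        Finset.sum_le_sum fun s _ => Finset.sum_le_sum fun t _ =>
          Finset.sum_le_sum fun u _ => hLR s t u
    _ = (∑ s : S, ∑ t : T, ∑ u : U,
          ((- p s t u * Real.log (pAB s t)) + (- p s t u * Real.log (pBC t u))))
        + ∑ s : S, ∑ t : T, ∑ u : U, (pAB s t * pBC t u / pB t - p s t u) := by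
        simp_rw [Finset.sum_add_distrib]
    _ = (∑ s : S, ∑ t : T, Real.negMulLog (pAB s t))
        + ∑ t : T, ∑ u : U, Real.negMulLog (pBC t u) := by
        rw [hRHS, add_zero, ← hR]


section EntropyAux

variable {Ω : Type*} [MeasurableSpace Ω] {μ : Measure Ω} [IsProbabilityMeasure μ]
variable {S T U : Type*} [Fintype S] [Fintype T] [Fintype U]
  [MeasurableSpace S] [MeasurableSingletonClass S]
  [MeasurableSpace T] [MeasurableSingletonClass T]
  [MeasurableSpace U] [MeasurableSingletonClass U]

lemma sum_measure_inter' {X : Ω → S} (hX : Measurable X) (A : Set Ω) :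
    ∑ s : S, (μ (X ⁻¹' {s} ∩ A)).toReal = (μ A).toReal := by
  have h : ∀ s : S, μ (X ⁻¹' {s} ∩ A) = μ.restrict A (X ⁻¹' {s}) := fun s =>
    (Measure.restrict_apply (hX (measurableSet_singleton s))).symm
  simp_rw [h]
  rw [← ENNReal.toReal_sum (fun a _ => measure_ne_top _ _),
    sum_measure_preimage_singleton _ (fun s _ => hX (measurableSet_singleton s))]
  simp

lemma sum_p_eq_one {X : Ω → S} (hX : Measurable X) :
    ∑ s : S, (μ (X ⁻¹' {s})).toReal = 1 := by
  have := sum_measure_inter' (μ := μ) hX Set.univ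
  simpa using this

lemma pair_preimage (X : Ω → S) (Y : Ω → T) (s : S) (t : T) :
    (fun ω => (X ω, Y ω)) ⁻¹' {(s, t)} = X ⁻¹' {s} ∩ Y ⁻¹' {t} := by
  ext ω; simp [Prod.ext_iff]

lemma Hent_pair (X : Ω → S) (Y : Ω → T) :
    Hent μ (fun ω => (X ω, Y ω))
      = ∑ s : S, ∑ t : T, Real.negMulLog ((μ (X ⁻¹' {s} ∩ Y ⁻¹' {t})).toReal) := by
  rw [Hent, Fintype.sum_prod_type]
  simp_rw [pair_preimage]

lemma Hent_comp_inj {X : Ω → S} {Y : Ω → T} (φ : S → T) (hφ : Function.Injective φ)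
    (h : ∀ ω, Y ω = φ (X ω)) : Hent μ Y = Hent μ X := by
  classical
  have hY : Y = fun ω => φ (X ω) := funext h
  subst hY
  have key : ∀ t : T, t ∉ Finset.univ.image φ →
      Real.negMulLog ((μ ((fun ω => φ (X ω)) ⁻¹' {t})).toReal) = 0 := by
    intro t ht
    have hem : (fun ω => φ (X ω)) ⁻¹' {t} = ∅ := by
      ext ω
      simp only [Set.mem_preimage, Set.mem_singleton_iff, Set.mem_empty_iff_false, iff_false]
      intro hh
      exact ht (Finset.mem_image.2 ⟨X ω, Finset.mem_univ _, hh⟩)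
    rw [hem]; simp
  calc Hent μ (fun ω => φ (X ω))
      = ∑ t ∈ Finset.univ.image φ,
          Real.negMulLog ((μ ((fun ω => φ (X ω)) ⁻¹' {t})).toReal) :=
        (Finset.sum_subset (Finset.subset_univ _) (fun t _ ht => key t ht)).symm
    _ = ∑ s : S, Real.negMulLog ((μ ((fun ω => φ (X ω)) ⁻¹' {φ s})).toReal) :=
        Finset.sum_image (fun x _ y _ hxy => hφ hxy)
    _ = Hent μ X := by
        refine Finset.sum_congr rfl fun s _ => ?_
        have hpre : (fun ω => φ (X ω)) ⁻¹' {φ s} = X ⁻¹' {s} := by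
          ext ω; simp [hφ.eq_iff]
        rw [hpre]


lemma Hent_pair_le [Nonempty S] {X : Ω → S} {Y : Ω → T}
    (hX : Measurable X) (hY : Measurable Y) :
    Hent μ (fun ω => (X ω, Y ω)) ≤ Hent μ Y + Real.log (Fintype.card S) := by
  classical
  set N : ℕ := Fintype.card S with hNdef
  have hN : 0 < (N : ℝ) := by
    have := Fintype.card_pos (α := S); exact_mod_cast this
  have step : ∀ t : T,
      ∑ s : S, Real.negMulLog ((μ (X ⁻¹' {s} ∩ Y ⁻¹' {t})).toReal)
        ≤ Real.negMulLog ((μ (Y ⁻¹' {t})).toReal)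
          + (μ (Y ⁻¹' {t})).toReal * Real.log N := by
    intro t
    set pt : ℝ := (μ (Y ⁻¹' {t})).toReal with hpt
    have hmarg : ∑ s : S, (μ (X ⁻¹' {s} ∩ Y ⁻¹' {t})).toReal = pt :=
      sum_measure_inter' hX _
    have hjensen := Real.concaveOn_negMulLog.le_map_sum
      (t := (Finset.univ : Finset S)) (w := fun _ => (N : ℝ)⁻¹)
      (p := fun s => (μ (X ⁻¹' {s} ∩ Y ⁻¹' {t})).toReal)
      (fun _ _ => by positivity)
      (by simp [Finset.card_univ, ← hNdef])
      (fun s _ => ENNReal.toReal_nonneg)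
    simp only [smul_eq_mul, ← Finset.mul_sum, hmarg] at hjensen
    have h2 : ∑ s : S, Real.negMulLog ((μ (X ⁻¹' {s} ∩ Y ⁻¹' {t})).toReal)
        ≤ (N : ℝ) * Real.negMulLog ((N : ℝ)⁻¹ * pt) := by
      have := mul_le_mul_of_nonneg_left hjensen (le_of_lt hN)
      calc ∑ s : S, Real.negMulLog ((μ (X ⁻¹' {s} ∩ Y ⁻¹' {t})).toReal)
          = (N : ℝ) * ((N : ℝ)⁻¹ * ∑ s : S, Real.negMulLog ((μ (X ⁻¹' {s} ∩ Y ⁻¹' {t})).toReal)) := by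
            rw [← mul_assoc, mul_inv_cancel₀ (ne_of_gt hN), one_mul]
        _ ≤ (N : ℝ) * Real.negMulLog ((N : ℝ)⁻¹ * pt) := this
    refine h2.trans_eq ?_
    rw [Real.negMulLog_mul]
    have hinv : Real.negMulLog ((N : ℝ)⁻¹) = (N : ℝ)⁻¹ * Real.log N := by
      rw [Real.negMulLog, Real.log_inv]; ring
    rw [hinv]
    field_simp
    ring
  calc Hent μ (fun ω => (X ω, Y ω))
      = ∑ t : T, ∑ s : S, Real.negMulLog ((μ (X ⁻¹' {s} ∩ Y ⁻¹' {t})).toReal) := by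
        rw [Hent_pair]; exact Finset.sum_comm
    _ ≤ ∑ t : T, (Real.negMulLog ((μ (Y ⁻¹' {t})).toReal)
          + (μ (Y ⁻¹' {t})).toReal * Real.log N) :=
        Finset.sum_le_sum fun t _ => step t
    _ = Hent μ Y + Real.log N := by
        rw [Finset.sum_add_distrib, ← Finset.sum_mul, sum_p_eq_one hY, one_mul, Hent]

lemma Hent_pair_of_indep {X : Ω → S} {Y : Ω → T} (hX : Measurable X) (hY : Measurable Y)
    (h : IndepFun X Y μ) :
    Hent μ (fun ω => (X ω, Y ω)) = Hent μ X + Hent μ Y := by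
  rw [Hent_pair]
  have hmul : ∀ (s : S) (t : T), (μ (X ⁻¹' {s} ∩ Y ⁻¹' {t})).toReal
      = (μ (X ⁻¹' {s})).toReal * (μ (Y ⁻¹' {t})).toReal := by
    intro s t
    rw [h.measure_inter_preimage_eq_mul _ _ (measurableSet_singleton s)
      (measurableSet_singleton t), ENNReal.toReal_mul]
  simp_rw [hmul, Real.negMulLog_mul]
  have hrow : ∀ s : S,
      ∑ t : T, ((μ (Y ⁻¹' {t})).toReal * Real.negMulLog ((μ (X ⁻¹' {s})).toReal)
        + (μ (X ⁻¹' {s})).toReal * Real.negMulLog ((μ (Y ⁻¹' {t})).toReal))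
      = Real.negMulLog ((μ (X ⁻¹' {s})).toReal) + (μ (X ⁻¹' {s})).toReal * Hent μ Y := by
    intro s
    rw [Finset.sum_add_distrib, ← Finset.sum_mul, sum_p_eq_one hY, one_mul,
      ← Finset.mul_sum, Hent]
  simp_rw [hrow]
  rw [Finset.sum_add_distrib, ← Finset.sum_mul, sum_p_eq_one hX, one_mul]
  rfl


lemma Hent_submodular {A : Ω → S} {B : Ω → T} {Cc : Ω → U}
    (hA : Measurable A) (hB : Measurable B) (hC : Measurable Cc) :
    Hent μ (fun ω => (A ω, (B ω, Cc ω))) + Hent μ B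
      ≤ Hent μ (fun ω => (A ω, B ω)) + Hent μ (fun ω => (B ω, Cc ω)) := by
  classical
  have hnn : ∀ (s : S) (t : T) (u : U),
      (0:ℝ) ≤ (μ (A ⁻¹' {s} ∩ B ⁻¹' {t} ∩ Cc ⁻¹' {u})).toReal :=
    fun _ _ _ => ENNReal.toReal_nonneg
  have mU : ∀ (s : S) (t : T), ∑ u : U, (μ (A ⁻¹' {s} ∩ B ⁻¹' {t} ∩ Cc ⁻¹' {u})).toReal
      = (μ (A ⁻¹' {s} ∩ B ⁻¹' {t})).toReal := by
    intro s t
    have h : ∀ u : U, A ⁻¹' {s} ∩ B ⁻¹' {t} ∩ Cc ⁻¹' {u}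
        = Cc ⁻¹' {u} ∩ (A ⁻¹' {s} ∩ B ⁻¹' {t}) := fun u => Set.inter_comm _ _
    simp_rw [h]
    exact sum_measure_inter' hC _
  have mS : ∀ (t : T) (u : U), ∑ s : S, (μ (A ⁻¹' {s} ∩ B ⁻¹' {t} ∩ Cc ⁻¹' {u})).toReal
      = (μ (B ⁻¹' {t} ∩ Cc ⁻¹' {u})).toReal := by
    intro t u
    have h : ∀ s : S, A ⁻¹' {s} ∩ B ⁻¹' {t} ∩ Cc ⁻¹' {u}
        = A ⁻¹' {s} ∩ (B ⁻¹' {t} ∩ Cc ⁻¹' {u}) := fun s => Set.inter_assoc _ _ _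
    simp_rw [h]
    exact sum_measure_inter' hA _
  have mB : ∀ t : T, ∑ s : S, ∑ u : U, (μ (A ⁻¹' {s} ∩ B ⁻¹' {t} ∩ Cc ⁻¹' {u})).toReal
      = (μ (B ⁻¹' {t})).toReal := by
    intro t
    simp_rw [mU]
    exact sum_measure_inter' hA _
  have hsum : ∑ t : T, ∑ s : S, ∑ u : U, (μ (A ⁻¹' {s} ∩ B ⁻¹' {t} ∩ Cc ⁻¹' {u})).toReal
      = 1 := by
    simp_rw [mB]
    exact sum_p_eq_one hB
  have main := real_submodular
    (fun s t u => (μ (A ⁻¹' {s} ∩ B ⁻¹' {t} ∩ Cc ⁻¹' {u})).toReal) hnn hsum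
  have eABC : Hent μ (fun ω => (A ω, (B ω, Cc ω)))
      = ∑ s : S, ∑ t : T, ∑ u : U,
          Real.negMulLog ((μ (A ⁻¹' {s} ∩ B ⁻¹' {t} ∩ Cc ⁻¹' {u})).toReal) := by
    rw [Hent_pair]
    refine Finset.sum_congr rfl fun s _ => ?_
    rw [Fintype.sum_prod_type]
    refine Finset.sum_congr rfl fun t _ => Finset.sum_congr rfl fun u _ => ?_
    rw [pair_preimage, ← Set.inter_assoc]
  have eAB : Hent μ (fun ω => (A ω, B ω))
      = ∑ s : S, ∑ t : T, Real.negMulLog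
          (∑ u : U, (μ (A ⁻¹' {s} ∩ B ⁻¹' {t} ∩ Cc ⁻¹' {u})).toReal) := by
    rw [Hent_pair]
    simp_rw [mU]
  have eBC : Hent μ (fun ω => (B ω, Cc ω))
      = ∑ t : T, ∑ u : U, Real.negMulLog
          (∑ s : S, (μ (A ⁻¹' {s} ∩ B ⁻¹' {t} ∩ Cc ⁻¹' {u})).toReal) := by
    rw [Hent_pair]
    simp_rw [mS]
  have eB : Hent μ B
      = ∑ t : T, Real.negMulLog
          (∑ s : S, ∑ u : U, (μ (A ⁻¹' {s} ∩ B ⁻¹' {t} ∩ Cc ⁻¹' {u})).toReal) := by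
    rw [Hent]
    simp_rw [mB]
  rw [eABC, eAB, eBC, eB]
  exact main

end EntropyAux

lemma TWX_eq_of_TWY2_eq {q n M1 M2 : ℕ} (C : TWCode q n M1 M2) (w1 : Fin M1) (w2 : Fin M2)
    (z1 z2 z2' : Fin n → ZMod q)
    (h : TWY2 C w1 w2 z1 z2 = TWY2 C w1 w2 z1 z2') :
    TWX C w1 w2 z1 z2 = TWX C w1 w2 z1 z2' := by
  have main : ∀ (k : ℕ) (i : Fin n), i.1 ≤ k →
      TWX C w1 w2 z1 z2 i = TWX C w1 w2 z1 z2' i := by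
    intro k
    induction k with
    | zero =>
      intro i hi
      rw [TWX, TWX]
      congr 1
      · congr 1
        funext j
        have := j.2
        omega
      · congr 1
        funext j
        have := j.2
        omega
    | succ k IH =>
      intro i hi
      rw [TWX, TWX]
      congr 1
      · congr 1
        funext j
        have hj : j.1 < n := j.2.trans i.2
        have hj2 := j.2
        show (TWX C w1 w2 z1 z2 ⟨j.1, hj⟩).1 + (TWX C w1 w2 z1 z2 ⟨j.1, hj⟩).2 + z1 ⟨j.1, hj⟩
          = (TWX C w1 w2 z1 z2' ⟨j.1, hj⟩).1 + (TWX C w1 w2 z1 z2' ⟨j.1, hj⟩).2 + z1 ⟨j.1, hj⟩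
        rw [IH ⟨j.1, hj⟩ (Nat.lt_succ_iff.mp (lt_of_lt_of_le hj2 hi))]
      · congr 1
        funext j
        have hj : j.1 < n := j.2.trans i.2
        exact congrFun h ⟨j.1, hj⟩
  funext i
  exact main i.1 i le_rfl

lemma TWY2_injective {q n M1 M2 : ℕ} (C : TWCode q n M1 M2) (w1 : Fin M1) (w2 : Fin M2)
    (z1 : Fin n → ZMod q) :
    Function.Injective (fun z2 => TWY2 C w1 w2 z1 z2) := by
  intro z2 z2' h
  have hX := TWX_eq_of_TWY2_eq C w1 w2 z1 z2 z2' h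
  funext i
  have h2 : TWY2 C w1 w2 z1 z2 i = TWY2 C w1 w2 z1 z2' i := congrFun h i
  rw [TWY2, TWY2, hX] at h2
  exact add_left_cancel h2

lemma TWX_eq_of_TWY1_eq {q n M1 M2 : ℕ} (C : TWCode q n M1 M2) (w1 : Fin M1) (w2 : Fin M2)
    (z1 z1' z2 : Fin n → ZMod q)
    (h : TWY1 C w1 w2 z1 z2 = TWY1 C w1 w2 z1' z2) :
    TWX C w1 w2 z1 z2 = TWX C w1 w2 z1' z2 := by
  have main : ∀ (k : ℕ) (i : Fin n), i.1 ≤ k →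
      TWX C w1 w2 z1 z2 i = TWX C w1 w2 z1' z2 i := by
    intro k
    induction k with
    | zero =>
      intro i hi
      rw [TWX, TWX]
      congr 1
      · congr 1
        funext j
        have := j.2
        omega
      · congr 1
        funext j
        have := j.2
        omega
    | succ k IH =>
      intro i hi
      rw [TWX, TWX]
      congr 1
      · congr 1
        funext j
        have hj : j.1 < n := j.2.trans i.2
        exact congrFun h ⟨j.1, hj⟩
      · congr 1
        funext j
        have hj : j.1 < n := j.2.trans i.2
        have hj2 := j.2
        show (TWX C w1 w2 z1 z2 ⟨j.1, hj⟩).1 + (TWX C w1 w2 z1 z2 ⟨j.1, hj⟩).2 + z2 ⟨j.1, hj⟩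
          = (TWX C w1 w2 z1' z2 ⟨j.1, hj⟩).1 + (TWX C w1 w2 z1' z2 ⟨j.1, hj⟩).2 + z2 ⟨j.1, hj⟩
        rw [IH ⟨j.1, hj⟩ (Nat.lt_succ_iff.mp (lt_of_lt_of_le hj2 hi))]
  funext i
  exact main i.1 i le_rfl

lemma TWY1_injective {q n M1 M2 : ℕ} (C : TWCode q n M1 M2) (w1 : Fin M1) (w2 : Fin M2)
    (z2 : Fin n → ZMod q) :
    Function.Injective (fun z1 => TWY1 C w1 w2 z1 z2) := by
  intro z1 z1' h
  have hX := TWX_eq_of_TWY1_eq C w1 w2 z1 z1' z2 h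
  funext i
  have h2 : TWY1 C w1 w2 z1 z2 i = TWY1 C w1 w2 z1' z2 i := congrFun h i
  rw [TWY1, TWY1, hX] at h2
  exact add_left_cancel h2

lemma twc_key {Ω : Type*} [MeasurableSpace Ω] (μ : Measure Ω) [IsProbabilityMeasure μ]
    (q n : ℕ) [NeZero q] {M1 M2 : ℕ}
    (Φ : Fin M1 → Fin M2 → (Fin n → ZMod q) → (Fin n → ZMod q) → (Fin n → ZMod q))
    (hΦ : ∀ w1 w2 z1, Function.Injective (Φ w1 w2 z1))
    (W1 : Ω → Fin M1) (W2 : Ω → Fin M2) (Z1 Z2 : Ω → Fin n → ZMod q)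
    (hW1 : Measurable W1) (hW2 : Measurable W2) (hZ1 : Measurable Z1) (hZ2 : Measurable Z2)
    (hInd : IndepFun (fun ω => (W1 ω, W2 ω, Z1 ω)) Z2 μ) :
    Hcond μ W1 W2 - Hcond μ W1 (fun ω => (W2 ω, Φ (W1 ω) (W2 ω) (Z1 ω) (Z2 ω)))
      ≤ n * Real.log q - Hent μ Z2 := by
  haveI : Nonempty (Fin n → ZMod q) := ⟨fun _ => 0⟩
  set Y : Ω → (Fin n → ZMod q) := fun ω => Φ (W1 ω) (W2 ω) (Z1 ω) (Z2 ω) with hYdef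
  have hYm : Measurable Y := by
    have h4 : Measurable (fun ω => (W1 ω, W2 ω, Z1 ω, Z2 ω)) :=
      hW1.prodMk (hW2.prodMk (hZ1.prodMk hZ2))
    exact (measurable_of_countable
      (fun p : Fin M1 × Fin M2 × (Fin n → ZMod q) × (Fin n → ZMod q) =>
        Φ p.1 p.2.1 p.2.2.1 p.2.2.2)).comp h4
  have hB : Measurable (fun ω => (W1 ω, W2 ω)) := hW1.prodMk hW2
  have hV : Measurable (fun ω => (W1 ω, W2 ω, Z1 ω)) := hW1.prodMk (hW2.prodMk hZ1)
  have hswap : Hent μ (fun ω => (W2 ω, Y ω)) = Hent μ (fun ω => (Y ω, W2 ω)) :=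
    Hent_comp_inj Prod.swap Prod.swap_injective (fun ω => rfl)
  have ineq1 : Hent μ (fun ω => (Y ω, W2 ω))
      ≤ Hent μ W2 + Real.log (Fintype.card (Fin n → ZMod q)) :=
    Hent_pair_le hYm hW2
  have hcard : Real.log (Fintype.card (Fin n → ZMod q)) = n * Real.log q := by
    have hc : Fintype.card (Fin n → ZMod q) = q ^ n := by
      simp [Fintype.card_fun, ZMod.card]
    rw [hc]
    push_cast
    exact Real.log_pow (n := n) (x := (q : ℝ))
  have ea : Hent μ (fun ω => (W1 ω, (W2 ω, Y ω))) = Hent μ (fun ω => (Y ω, (W1 ω, W2 ω))) := by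
    refine Hent_comp_inj
      (fun p : (Fin n → ZMod q) × (Fin M1 × Fin M2) => (p.2.1, (p.2.2, p.1))) ?_ (fun ω => rfl)
    rintro ⟨a1, a2, a3⟩ ⟨b1, b2, b3⟩ hab
    simp only [Prod.mk.injEq] at hab ⊢
    tauto
  have ec : Hent μ (fun ω => ((W1 ω, W2 ω), Z1 ω)) = Hent μ (fun ω => (W1 ω, W2 ω, Z1 ω)) := by
    refine Hent_comp_inj
      (fun p : Fin M1 × Fin M2 × (Fin n → ZMod q) => ((p.1, p.2.1), p.2.2)) ?_ (fun ω => rfl)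
    rintro ⟨a1, a2, a3⟩ ⟨b1, b2, b3⟩ hab
    simp only [Prod.mk.injEq] at hab ⊢
    tauto
  have ed : Hent μ (fun ω => (Y ω, ((W1 ω, W2 ω), Z1 ω)))
      = Hent μ (fun ω => ((W1 ω, W2 ω, Z1 ω), Z2 ω)) := by
    refine Hent_comp_inj
      (fun p : (Fin M1 × Fin M2 × (Fin n → ZMod q)) × (Fin n → ZMod q) =>
        (Φ p.1.1 p.1.2.1 p.1.2.2 p.2, ((p.1.1, p.1.2.1), p.1.2.2))) ?_ (fun ω => rfl)
    rintro ⟨⟨a1, a2, a3⟩, a4⟩ ⟨⟨b1, b2, b3⟩, b4⟩ hab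
    simp only [Prod.mk.injEq] at hab
    obtain ⟨h1, ⟨h2, h3⟩, h4⟩ := hab
    subst h2
    subst h3
    subst h4
    have := hΦ a1 a2 a3 h1
    simp [this]
  have ee : Hent μ (fun ω => ((W1 ω, W2 ω, Z1 ω), Z2 ω))
      = Hent μ (fun ω => (W1 ω, W2 ω, Z1 ω)) + Hent μ Z2 :=
    Hent_pair_of_indep hV hZ2 hInd
  have sub : Hent μ (fun ω => (Y ω, ((W1 ω, W2 ω), Z1 ω))) + Hent μ (fun ω => (W1 ω, W2 ω))
      ≤ Hent μ (fun ω => (Y ω, (W1 ω, W2 ω))) + Hent μ (fun ω => ((W1 ω, W2 ω), Z1 ω)) :=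
    Hent_submodular hYm hB hZ1
  show (Hent μ (fun ω => (W1 ω, W2 ω)) - Hent μ W2)
      - (Hent μ (fun ω => (W1 ω, (W2 ω, Y ω))) - Hent μ (fun ω => (W2 ω, Y ω)))
      ≤ n * Real.log q - Hent μ Z2
  rw [ea, hswap]
  linarith [ineq1, hcard, sub, ec, ed, ee]

/-- **Key converse inequality for the two-way channel**: for any (n, M1, M2) code for the
additive-noise two-way channel, if the noise vector Z2^n is independent of (W1, W2, Z1^n),
then H(W1 | W2) − H(W1 | W2, Y2^n) ≤ n log q − H(Z2^n); symmetrically, if Z1^n is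
independent of (W1, W2, Z2^n), then H(W2 | W1) − H(W2 | W1, Y1^n) ≤ n log q − H(Z1^n). -/
theorem twc_key_converse_inequality {Ω : Type*} [MeasurableSpace Ω] (μ : Measure Ω)
    [IsProbabilityMeasure μ] (q : ℕ) [NeZero q] (hq : 2 ≤ q)
    (n M1 M2 : ℕ) (C : TWCode q n M1 M2)
    (W1 : Ω → Fin M1) (W2 : Ω → Fin M2) (Z1 Z2 : Ω → Fin n → ZMod q)
    (hW1 : Measurable W1) (hW2 : Measurable W2)
    (hZ1 : Measurable Z1) (hZ2 : Measurable Z2) :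
    (IndepFun (fun ω => (W1 ω, W2 ω, Z1 ω)) Z2 μ →
      Hcond μ W1 W2 -
        Hcond μ W1 (fun ω => (W2 ω, TWY2 C (W1 ω) (W2 ω) (Z1 ω) (Z2 ω))) ≤
        n * Real.log q - Hent μ Z2) ∧
    (IndepFun (fun ω => (W1 ω, W2 ω, Z2 ω)) Z1 μ →
      Hcond μ W2 W1 -
        Hcond μ W2 (fun ω => (W1 ω, TWY1 C (W1 ω) (W2 ω) (Z1 ω) (Z2 ω))) ≤
        n * Real.log q - Hent μ Z1) := by
  constructor
  · intro hInd
    exact twc_key μ q n (fun w1 w2 z1 z2 => TWY2 C w1 w2 z1 z2)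
      (fun w1 w2 z1 => TWY2_injective C w1 w2 z1) W1 W2 Z1 Z2 hW1 hW2 hZ1 hZ2 hInd
  · intro hInd
    have hm : Measurable (fun p : Fin M1 × Fin M2 × (Fin n → ZMod q) =>
        (p.2.1, p.1, p.2.2)) := measurable_of_countable _
    have hInd' : IndepFun (fun ω => (W2 ω, W1 ω, Z2 ω)) Z1 μ :=
      hInd.comp hm measurable_id
    exact twc_key μ q n (fun w2 w1 z2 z1 => TWY1 C w1 w2 z1 z2)
      (fun w2 w1 z2 => TWY1_injective C w1 w2 z2) W2 W1 Z2 Z1 hW2 hW1 hZ2 hZ1 hInd'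


end
end

section
/- Markov chain for the R31 converse (equation (3R1)): for any (n, M13, M23, M31, M32) code for the additive-noise MA/DBC with i.i.d. noise processes {Z_{1,i}} and {Z_{2,i}} that are mutually independent, independent of Z3^n and of the messages, for every 1 ≤ i ≤ n the pair (Ỹ_{1,i}, Ỹ_{2,i}) is conditionally independent of W31 given (Ỹ1^{i−1}, Ỹ2^{i−1}, W32, W13, W23, X_{3,i}), where Ỹ_{1,j} = X_{3,j} + Z_{1,j} and Ỹ_{2,j} = X_{3,j} + Z_{1,j} + Z_{2,j}. -/
open MeasureTheory ProbabilityTheory Real Filter Topology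
open scoped ENNReal

noncomputable section

/-- Mutual information I(X ; Y) = H(X) + H(Y) − H(X, Y). -/
def MI {Ω S T : Type*} [MeasurableSpace Ω] [Fintype S] [Fintype T]
    (μ : Measure Ω) (X : Ω → S) (Y : Ω → T) : ℝ :=
  Hent μ X + Hent μ Y - Hent μ (fun ω => (X ω, Y ω))

/-- Conditional mutual information
I(X ; Y | Z) = H(X, Z) + H(Y, Z) − H(X, Y, Z) − H(Z). -/
def CMI {Ω S T U : Type*} [MeasurableSpace Ω] [Fintype S] [Fintype T] [Fintype U]
    (μ : Measure Ω) (X : Ω → S) (Y : Ω → T) (Z : Ω → U) : ℝ :=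
  Hent μ (fun ω => (X ω, Z ω)) + Hent μ (fun ω => (Y ω, Z ω))
    - Hent μ (fun ω => (X ω, Y ω, Z ω)) - Hent μ Z

/-- Elementary conditional independence of finitely-valued random variables X and Y given Z:
for all values a, b, c,  P(X=a, Y=b, Z=c) · P(Z=c) = P(X=a, Z=c) · P(Y=b, Z=c). -/
def CondIndepElem {Ω S T U : Type*} [MeasurableSpace Ω] (μ : Measure Ω)
    (X : Ω → S) (Y : Ω → T) (Z : Ω → U) : Prop :=
  ∀ (a : S) (b : T) (c : U),
    μ (X ⁻¹' {a} ∩ Y ⁻¹' {b} ∩ Z ⁻¹' {c}) * μ (Z ⁻¹' {c}) =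
      μ (X ⁻¹' {a} ∩ Z ⁻¹' {c}) * μ (Y ⁻¹' {b} ∩ Z ⁻¹' {c})

/-- An (n, M13, M23, M31, M32) code for the multiple access / degraded broadcast channel. -/
structure MACode (q n M13 M23 M31 M32 : ℕ) where
  f1 : Fin M13 → (i : Fin n) → (Fin i.1 → ZMod q) → ZMod q
  f2 : Fin M23 → (i : Fin n) → (Fin i.1 → ZMod q) → ZMod q
  f3 : Fin M31 → Fin M32 → (i : Fin n) → (Fin i.1 → ZMod q) → ZMod q
  g1 : Fin M13 → (Fin n → ZMod q) → Fin M31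
  g2 : Fin M23 → (Fin n → ZMod q) → Fin M32
  g3 : Fin M31 → Fin M32 → (Fin n → ZMod q) → Fin M13 × Fin M23

/-- The triple of channel inputs (X_{1,i}, X_{2,i}, X_{3,i}) produced by the adaptive
encoders, where the past outputs are Y_{1,j} = X_{1,j} + X_{3,j} + Z_{1,j},
Y_{2,j} = X_{2,j} + X_{3,j} + Z_{1,j} + Z_{2,j} and
Y_{3,j} = X_{1,j} + X_{2,j} + X_{3,j} + Z_{3,j} (addition mod q). -/
def MAX {q n M13 M23 M31 M32 : ℕ} (C : MACode q n M13 M23 M31 M32)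
    (w13 : Fin M13) (w23 : Fin M23) (w31 : Fin M31) (w32 : Fin M32)
    (z1 z2 z3 : Fin n → ZMod q) : (i : Fin n) → ZMod q × ZMod q × ZMod q
  | i =>
    (C.f1 w13 i (fun j =>
        have h : j.1 < n := j.2.trans i.2
        (MAX C w13 w23 w31 w32 z1 z2 z3 ⟨j.1, h⟩).1 +
          (MAX C w13 w23 w31 w32 z1 z2 z3 ⟨j.1, h⟩).2.2 + z1 ⟨j.1, h⟩),
     C.f2 w23 i (fun j =>
        have h : j.1 < n := j.2.trans i.2
        (MAX C w13 w23 w31 w32 z1 z2 z3 ⟨j.1, h⟩).2.1 +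
          (MAX C w13 w23 w31 w32 z1 z2 z3 ⟨j.1, h⟩).2.2 + z1 ⟨j.1, h⟩ + z2 ⟨j.1, h⟩),
     C.f3 w31 w32 i (fun j =>
        have h : j.1 < n := j.2.trans i.2
        (MAX C w13 w23 w31 w32 z1 z2 z3 ⟨j.1, h⟩).1 +
          (MAX C w13 w23 w31 w32 z1 z2 z3 ⟨j.1, h⟩).2.1 +
          (MAX C w13 w23 w31 w32 z1 z2 z3 ⟨j.1, h⟩).2.2 + z3 ⟨j.1, h⟩))
  termination_by i => i.1
  decreasing_by all_goals exact j.2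

/-- Output sequence Y_1^n at user 1. -/
def MAY1 {q n M13 M23 M31 M32 : ℕ} (C : MACode q n M13 M23 M31 M32)
    (w13 : Fin M13) (w23 : Fin M23) (w31 : Fin M31) (w32 : Fin M32)
    (z1 z2 z3 : Fin n → ZMod q) (i : Fin n) : ZMod q :=
  (MAX C w13 w23 w31 w32 z1 z2 z3 i).1 + (MAX C w13 w23 w31 w32 z1 z2 z3 i).2.2 + z1 i

/-- Output sequence Y_2^n at user 2. -/
def MAY2 {q n M13 M23 M31 M32 : ℕ} (C : MACode q n M13 M23 M31 M32)
    (w13 : Fin M13) (w23 : Fin M23) (w31 : Fin M31) (w32 : Fin M32)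
    (z1 z2 z3 : Fin n → ZMod q) (i : Fin n) : ZMod q :=
  (MAX C w13 w23 w31 w32 z1 z2 z3 i).2.1 + (MAX C w13 w23 w31 w32 z1 z2 z3 i).2.2 +
    z1 i + z2 i

/-- Output sequence Y_3^n at user 3. -/
def MAY3 {q n M13 M23 M31 M32 : ℕ} (C : MACode q n M13 M23 M31 M32)
    (w13 : Fin M13) (w23 : Fin M23) (w31 : Fin M31) (w32 : Fin M32)
    (z1 z2 z3 : Fin n → ZMod q) (i : Fin n) : ZMod q :=
  (MAX C w13 w23 w31 w32 z1 z2 z3 i).1 + (MAX C w13 w23 w31 w32 z1 z2 z3 i).2.1 +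
    (MAX C w13 w23 w31 w32 z1 z2 z3 i).2.2 + z3 i

/-- The broadcast-direction "clean" output letter Ỹ_{1,j} = X_{3,j} + Z_{1,j}. -/
def tY1 {q n M13 M23 M31 M32 : ℕ} (C : MACode q n M13 M23 M31 M32)
    (w13 : Fin M13) (w23 : Fin M23) (w31 : Fin M31) (w32 : Fin M32)
    (z1 z2 z3 : Fin n → ZMod q) (j : Fin n) : ZMod q :=
  (MAX C w13 w23 w31 w32 z1 z2 z3 j).2.2 + z1 j

/-- The broadcast-direction degraded output letter Ỹ_{2,j} = X_{3,j} + Z_{1,j} + Z_{2,j}. -/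
def tY2 {q n M13 M23 M31 M32 : ℕ} (C : MACode q n M13 M23 M31 M32)
    (w13 : Fin M13) (w23 : Fin M23) (w31 : Fin M31) (w32 : Fin M32)
    (z1 z2 z3 : Fin n → ZMod q) (j : Fin n) : ZMod q :=
  (MAX C w13 w23 w31 w32 z1 z2 z3 j).2.2 + z1 j + z2 j
lemma MAX_congr {q n M13 M23 M31 M32 : ℕ} (C : MACode q n M13 M23 M31 M32)
    (w13 : Fin M13) (w23 : Fin M23) (w31 : Fin M31) (w32 : Fin M32)
    (z1 z2 z3 z1' z2' z3' : Fin n → ZMod q) :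
    ∀ (k : ℕ) (hk : k < n),
      (∀ j : Fin n, j.1 < k → z1 j = z1' j) →
      (∀ j : Fin n, j.1 < k → z2 j = z2' j) →
      (∀ j : Fin n, j.1 < k → z3 j = z3' j) →
      MAX C w13 w23 w31 w32 z1 z2 z3 ⟨k, hk⟩ =
        MAX C w13 w23 w31 w32 z1' z2' z3' ⟨k, hk⟩ := by
  intro k
  induction k using Nat.strong_induction_on with
  | _ k IH =>
    intro hk h1 h2 h3
    rw [MAX, MAX]
    have hM : ∀ j : Fin n, j.1 < k →
        MAX C w13 w23 w31 w32 z1 z2 z3 j = MAX C w13 w23 w31 w32 z1' z2' z3' j := by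
      intro j hj
      have := IH j.1 hj (j.2) (fun m hm => h1 m (hm.trans hj)) (fun m hm => h2 m (hm.trans hj))
        (fun m hm => h3 m (hm.trans hj))
      simpa using this
    simp only [Prod.mk.injEq]
    refine ⟨?_, ?_, ?_⟩
    · exact congrArg _ (funext fun j => by
        have hj : (j : ℕ) < k := j.2
        rw [hM ⟨j.1, _⟩ hj, h1 ⟨j.1, _⟩ hj])
    · exact congrArg _ (funext fun j => by
        have hj : (j : ℕ) < k := j.2
        rw [hM ⟨j.1, _⟩ hj, h1 ⟨j.1, _⟩ hj, h2 ⟨j.1, _⟩ hj])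
    · exact congrArg _ (funext fun j => by
        have hj : (j : ℕ) < k := j.2
        rw [hM ⟨j.1, _⟩ hj, h3 ⟨j.1, _⟩ hj])
private lemma coord_split {Ω : Type*} [MeasurableSpace Ω] (μ : Measure Ω) {q n : ℕ} [NeZero q]
    (V : Ω → Fin n → ZMod q)
    (hiid : iIndepFun (fun i ω => V ω i) μ)
    (i : Fin n) (u1 : ZMod q) (α : Fin i.1 → ZMod q) :
    μ (V ⁻¹' {z | z i = u1 ∧ ∀ j : Fin i.1, z ⟨j.1, j.2.trans i.2⟩ = α j})
      = μ ((fun ω => V ω i) ⁻¹' {u1})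
        * μ (V ⁻¹' {z | ∀ j : Fin i.1, z ⟨j.1, j.2.trans i.2⟩ = α j}) := by
  classical
  set t : Finset (Fin n) := Finset.univ.filter (fun j : Fin n => j.1 < i.1) with ht
  set sets : Fin n → Set (ZMod q) :=
    (fun j => if hj : j.1 < i.1 then {α ⟨j.1, hj⟩} else {u1}) with hsets
  have hprod := iIndepFun_iff_measure_inter_preimage_eq_mul.mp hiid
  have hit : i ∉ t := by simp [ht]
  have h1 : V ⁻¹' {z | z i = u1 ∧ ∀ j : Fin i.1, z ⟨j.1, j.2.trans i.2⟩ = α j}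
      = ⋂ j ∈ insert i t, (fun ω => V ω j) ⁻¹' sets j := by
    ext ω
    simp only [Set.mem_preimage, Set.mem_setOf_eq, Set.mem_iInter, Finset.mem_insert, ht,
      Finset.mem_filter, Finset.mem_univ, true_and, hsets]
    constructor
    · rintro ⟨h0, h⟩ j hj
      rcases hj with rfl | hj
      · simp only [dif_neg (lt_irrefl _), Set.mem_singleton_iff]
        exact h0
      · simp only [dif_pos hj, Set.mem_singleton_iff]
        exact h ⟨j.1, hj⟩
    · intro h
      constructor
      · have := h i (Or.inl rfl)
        simpa only [dif_neg (lt_irrefl i.1), Set.mem_singleton_iff] using this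
      · intro j
        have := h ⟨j.1, j.2.trans i.2⟩ (Or.inr j.2)
        simpa only [dif_pos j.2, Set.mem_singleton_iff] using this
  have h2 : V ⁻¹' {z | ∀ j : Fin i.1, z ⟨j.1, j.2.trans i.2⟩ = α j}
      = ⋂ j ∈ t, (fun ω => V ω j) ⁻¹' sets j := by
    ext ω
    simp only [Set.mem_preimage, Set.mem_setOf_eq, Set.mem_iInter, ht,
      Finset.mem_filter, Finset.mem_univ, true_and, hsets]
    constructor
    · intro h j hj
      simp only [dif_pos hj, Set.mem_singleton_iff]
      exact h ⟨j.1, hj⟩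
    · intro h j
      have := h ⟨j.1, j.2.trans i.2⟩ j.2
      simpa only [dif_pos j.2, Set.mem_singleton_iff] using this
  rw [h1, h2, hprod _ (fun _ _ => (Set.toFinite _).measurableSet),
    hprod _ (fun _ _ => (Set.toFinite _).measurableSet), Finset.prod_insert hit]
  congr 1
  simp only [hsets, dif_neg (lt_irrefl i.1)]
private lemma indep_key {Ω : Type*} [MeasurableSpace Ω] (μ : Measure Ω)
    {q n M13 M23 M31 M32 : ℕ} [NeZero q]
    (W13 : Ω → Fin M13) (W23 : Ω → Fin M23) (W31 : Ω → Fin M31) (W32 : Ω → Fin M32)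
    (Z1 Z2 Z3 : Ω → Fin n → ZMod q)
    (hW13 : Measurable W13) (hW23 : Measurable W23)
    (hW31 : Measurable W31) (hW32 : Measurable W32)
    (hZ1 : Measurable Z1) (hZ2 : Measurable Z2) (hZ3 : Measurable Z3)
    (hiid1 : iIndepFun (fun i ω => Z1 ω i) μ)
    (hiid2 : iIndepFun (fun i ω => Z2 ω i) μ)
    (hindep12 : IndepFun Z1 Z2 μ)
    (hindep : IndepFun (fun ω => (Z1 ω, Z2 ω))
      (fun ω => (Z3 ω, W13 ω, W23 ω, W31 ω, W32 ω)) μ)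
    (i : Fin n) (u : ZMod q × ZMod q)
    (S : Set (Fin M13 × Fin M23 × Fin M31 × Fin M32 × (Fin n → ZMod q) ×
      (Fin i.1 → ZMod q) × (Fin i.1 → ZMod q))) :
    μ ((fun ω => (Z1 ω i, Z2 ω i)) ⁻¹' {u} ∩
        (fun ω => (W13 ω, W23 ω, W31 ω, W32 ω, Z3 ω,
          (fun j : Fin i.1 => Z1 ω ⟨j.1, j.2.trans i.2⟩),
          (fun j : Fin i.1 => Z2 ω ⟨j.1, j.2.trans i.2⟩))) ⁻¹' S) =
      μ ((fun ω => (Z1 ω i, Z2 ω i)) ⁻¹' {u}) *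
        μ ((fun ω => (W13 ω, W23 ω, W31 ω, W32 ω, Z3 ω,
          (fun j : Fin i.1 => Z1 ω ⟨j.1, j.2.trans i.2⟩),
          (fun j : Fin i.1 => Z2 ω ⟨j.1, j.2.trans i.2⟩))) ⁻¹' S) := by
  classical
  set U : Ω → ZMod q × ZMod q := fun ω => (Z1 ω i, Z2 ω i) with hU
  set G : Ω → Fin M13 × Fin M23 × Fin M31 × Fin M32 × (Fin n → ZMod q) ×
      (Fin i.1 → ZMod q) × (Fin i.1 → ZMod q) :=
    fun ω => (W13 ω, W23 ω, W31 ω, W32 ω, Z3 ω,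
          (fun j : Fin i.1 => Z1 ω ⟨j.1, j.2.trans i.2⟩),
          (fun j : Fin i.1 => Z2 ω ⟨j.1, j.2.trans i.2⟩)) with hG
  -- the splitting of the two noise-coordinate events
  have hU1 : μ (U ⁻¹' {u}) =
      μ ((fun ω => Z1 ω i) ⁻¹' {u.1}) * μ ((fun ω => Z2 ω i) ⁻¹' {u.2}) := by
    have hset : U ⁻¹' {u} = Z1 ⁻¹' {z | z i = u.1} ∩ Z2 ⁻¹' {z | z i = u.2} := by
      ext ω
      simp [hU, Prod.ext_iff]
    rw [hset, hindep12.measure_inter_preimage_eq_mul _ _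
      (Set.toFinite _).measurableSet (Set.toFinite _).measurableSet]
    rfl
  -- singleton version of the claim
  have hsingle : ∀ g, μ (U ⁻¹' {u} ∩ G ⁻¹' {g}) = μ (U ⁻¹' {u}) * μ (G ⁻¹' {g}) := by
    rintro ⟨w13, w23, w31, w32, z3, α, β⟩
    set A1 : Set (Fin n → ZMod q) :=
      {z | z i = u.1 ∧ ∀ j : Fin i.1, z ⟨j.1, j.2.trans i.2⟩ = α j} with hA1
    set A2 : Set (Fin n → ZMod q) :=
      {z | z i = u.2 ∧ ∀ j : Fin i.1, z ⟨j.1, j.2.trans i.2⟩ = β j} with hA2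
    set B1 : Set (Fin n → ZMod q) :=
      {z | ∀ j : Fin i.1, z ⟨j.1, j.2.trans i.2⟩ = α j} with hB1
    set B2 : Set (Fin n → ZMod q) :=
      {z | ∀ j : Fin i.1, z ⟨j.1, j.2.trans i.2⟩ = β j} with hB2
    have hE1 : U ⁻¹' {u} ∩ G ⁻¹' {(w13, w23, w31, w32, z3, α, β)} =
        (fun ω => (Z1 ω, Z2 ω)) ⁻¹' (A1 ×ˢ A2) ∩
          (fun ω => (Z3 ω, W13 ω, W23 ω, W31 ω, W32 ω)) ⁻¹' {(z3, w13, w23, w31, w32)} := by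
      ext ω
      simp only [hU, hG, hA1, hA2, Set.mem_inter_iff, Set.mem_preimage,
        Set.mem_singleton_iff, Prod.ext_iff, Set.mem_prod, Set.mem_setOf_eq, funext_iff]
      tauto
    have hE2 : G ⁻¹' {(w13, w23, w31, w32, z3, α, β)} =
        (fun ω => (Z1 ω, Z2 ω)) ⁻¹' (B1 ×ˢ B2) ∩
          (fun ω => (Z3 ω, W13 ω, W23 ω, W31 ω, W32 ω)) ⁻¹' {(z3, w13, w23, w31, w32)} := by
      ext ω
      simp only [hG, hB1, hB2, Set.mem_inter_iff, Set.mem_preimage,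
        Set.mem_singleton_iff, Prod.ext_iff, Set.mem_prod, Set.mem_setOf_eq, funext_iff]
      tauto
    have hsplit12 : ∀ s t : Set (Fin n → ZMod q),
        μ ((fun ω => (Z1 ω, Z2 ω)) ⁻¹' (s ×ˢ t)) = μ (Z1 ⁻¹' s) * μ (Z2 ⁻¹' t) := by
      intro s t
      rw [Set.mk_preimage_prod, hindep12.measure_inter_preimage_eq_mul _ _
        (Set.toFinite _).measurableSet (Set.toFinite _).measurableSet]
    rw [hE1, hE2,
      hindep.measure_inter_preimage_eq_mul _ _
        (Set.toFinite _).measurableSet (Set.toFinite _).measurableSet,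
      hindep.measure_inter_preimage_eq_mul _ _
        (Set.toFinite _).measurableSet (Set.toFinite _).measurableSet,
      hsplit12, hsplit12, hU1]
    have c1 := coord_split μ Z1 hiid1 i u.1 α
    have c2 := coord_split μ Z2 hiid2 i u.2 β
    rw [← hA1, ← hB1] at c1
    rw [← hA2, ← hB2] at c2
    rw [c1, c2]
    ring
  -- measurability of G
  have hGmeas : Measurable G :=
    hW13.prodMk (hW23.prodMk (hW31.prodMk (hW32.prodMk (hZ3.prodMk
      ((measurable_pi_lambda _ (fun j => (measurable_pi_apply _).comp hZ1)).prodMk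
        (measurable_pi_lambda _ (fun j => (measurable_pi_apply _).comp hZ2)))))))
  have hUmeas : Measurable U := ((measurable_pi_apply i).comp hZ1).prodMk
    ((measurable_pi_apply i).comp hZ2)
  -- general S by finite additivity
  have hSfin := S.toFinite
  have hcup : G ⁻¹' S = ⋃ g ∈ hSfin.toFinset, G ⁻¹' {g} := by
    ext ω
    simp only [Set.mem_preimage, Set.mem_iUnion, Set.Finite.mem_toFinset,
      Set.mem_singleton_iff, exists_prop]
    exact ⟨fun h => ⟨G ω, h, rfl⟩, fun ⟨g, hg, he⟩ => he ▸ hg⟩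
  have hdisj : ∀ (f : _ → Set Ω), (∀ g, f g ⊆ G ⁻¹' {g}) →
      (↑hSfin.toFinset : Set _).PairwiseDisjoint f := by
    intro f hf g₁ _ g₂ _ hne
    refine Set.disjoint_left.mpr fun ω h1 h2 => hne ?_
    have e1 := hf g₁ h1
    have e2 := hf g₂ h2
    simp only [Set.mem_preimage, Set.mem_singleton_iff] at e1 e2
    rw [← e1, ← e2]
  have hmeas1 : ∀ g, MeasurableSet (G ⁻¹' {g}) := fun g =>
    hGmeas (Set.toFinite _).measurableSet
  rw [hcup, Set.inter_iUnion₂]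
  rw [measure_biUnion_finset (hdisj _ (fun g => Set.inter_subset_right))
    (fun g _ => (hUmeas (Set.toFinite _).measurableSet).inter (hmeas1 g))]
  rw [measure_biUnion_finset (hdisj _ (fun g => subset_rfl)) (fun g _ => hmeas1 g)]
  rw [Finset.mul_sum]
  exact Finset.sum_congr rfl fun g _ => hsingle g

/-- **Markov chain for the R31 converse** (equation (3R1)): with {Z_{1,i}} and {Z_{2,i}}
i.i.d., mutually independent, and independent of Z3^n and of the messages, for every time i
(0-based; 1-based time i+1, so 1 ≤ i+1 ≤ n) the pair (Ỹ_{1,i}, Ỹ_{2,i}) is conditionally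
independent of W31 given (Ỹ1^{i−1}, Ỹ2^{i−1}, W32, W13, W23, X_{3,i}), where
Ỹ_{1,j} = X_{3,j} + Z_{1,j} and Ỹ_{2,j} = X_{3,j} + Z_{1,j} + Z_{2,j}. -/
theorem madbc_r31_markov_chain {Ω : Type*} [MeasurableSpace Ω] (μ : Measure Ω)
    [IsProbabilityMeasure μ] (q : ℕ) [NeZero q] (hq : 2 ≤ q)
    (n M13 M23 M31 M32 : ℕ) (C : MACode q n M13 M23 M31 M32)
    (W13 : Ω → Fin M13) (W23 : Ω → Fin M23) (W31 : Ω → Fin M31) (W32 : Ω → Fin M32)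
    (Z1 Z2 Z3 : Ω → Fin n → ZMod q)
    (hW13 : Measurable W13) (hW23 : Measurable W23)
    (hW31 : Measurable W31) (hW32 : Measurable W32)
    (hZ1 : Measurable Z1) (hZ2 : Measurable Z2) (hZ3 : Measurable Z3)
    -- {Z_{1,i}} and {Z_{2,i}} are i.i.d. processes
    (hiid1 : iIndepFun (fun i ω => Z1 ω i) μ)
    (hid1 : ∀ i j : Fin n, IdentDistrib (fun ω => Z1 ω i) (fun ω => Z1 ω j) μ μ)
    (hiid2 : iIndepFun (fun i ω => Z2 ω i) μ)
    (hid2 : ∀ i j : Fin n, IdentDistrib (fun ω => Z2 ω i) (fun ω => Z2 ω j) μ μ)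
    -- Z1^n and Z2^n are mutually independent ...
    (hindep12 : IndepFun Z1 Z2 μ)
    -- ... and independent of Z3^n and of the messages
    (hindep : IndepFun (fun ω => (Z1 ω, Z2 ω))
      (fun ω => (Z3 ω, W13 ω, W23 ω, W31 ω, W32 ω)) μ) :
    ∀ i : Fin n,
      CondIndepElem μ
        -- X = (Ỹ_{1,i}, Ỹ_{2,i})
        (fun ω => (tY1 C (W13 ω) (W23 ω) (W31 ω) (W32 ω) (Z1 ω) (Z2 ω) (Z3 ω) i,
                   tY2 C (W13 ω) (W23 ω) (W31 ω) (W32 ω) (Z1 ω) (Z2 ω) (Z3 ω) i))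
        -- Y = W31
        W31
        -- Z = (Ỹ1^{i-1}, Ỹ2^{i-1}, W32, W13, W23, X_{3,i})
        (fun ω =>
          ((fun j : Fin i.1 =>
              tY1 C (W13 ω) (W23 ω) (W31 ω) (W32 ω) (Z1 ω) (Z2 ω) (Z3 ω)
                ⟨j.1, j.2.trans i.2⟩),
           (fun j : Fin i.1 =>
              tY2 C (W13 ω) (W23 ω) (W31 ω) (W32 ω) (Z1 ω) (Z2 ω) (Z3 ω)
                ⟨j.1, j.2.trans i.2⟩),
           W32 ω, W13 ω, W23 ω,
           (MAX C (W13 ω) (W23 ω) (W31 ω) (W32 ω) (Z1 ω) (Z2 ω) (Z3 ω) i).2.2)) := by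
  intro i a b c
  classical
  set X : Ω → ZMod q × ZMod q :=
    fun ω => (tY1 C (W13 ω) (W23 ω) (W31 ω) (W32 ω) (Z1 ω) (Z2 ω) (Z3 ω) i,
                   tY2 C (W13 ω) (W23 ω) (W31 ω) (W32 ω) (Z1 ω) (Z2 ω) (Z3 ω) i) with hXdef
  set Zm : Ω → (Fin i.1 → ZMod q) × (Fin i.1 → ZMod q) × Fin M32 × Fin M13 × Fin M23 × ZMod q :=
    (fun ω =>
          ((fun j : Fin i.1 =>
              tY1 C (W13 ω) (W23 ω) (W31 ω) (W32 ω) (Z1 ω) (Z2 ω) (Z3 ω)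
                ⟨j.1, j.2.trans i.2⟩),
           (fun j : Fin i.1 =>
              tY2 C (W13 ω) (W23 ω) (W31 ω) (W32 ω) (Z1 ω) (Z2 ω) (Z3 ω)
                ⟨j.1, j.2.trans i.2⟩),
           W32 ω, W13 ω, W23 ω,
           (MAX C (W13 ω) (W23 ω) (W31 ω) (W32 ω) (Z1 ω) (Z2 ω) (Z3 ω) i).2.2)) with hZmdef
  set U : Ω → ZMod q × ZMod q := fun ω => (Z1 ω i, Z2 ω i) with hUdef
  set G : Ω → Fin M13 × Fin M23 × Fin M31 × Fin M32 × (Fin n → ZMod q) ×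
      (Fin i.1 → ZMod q) × (Fin i.1 → ZMod q) :=
    fun ω => (W13 ω, W23 ω, W31 ω, W32 ω, Z3 ω,
      (fun j : Fin i.1 => Z1 ω ⟨j.1, j.2.trans i.2⟩),
      (fun j : Fin i.1 => Z2 ω ⟨j.1, j.2.trans i.2⟩)) with hGdef
  set ext0 : (Fin i.1 → ZMod q) → (Fin n → ZMod q) :=
    (fun γ j => if hj : j.1 < i.1 then γ ⟨j.1, hj⟩ else 0) with hext0
  set Ψ : (Fin M13 × Fin M23 × Fin M31 × Fin M32 × (Fin n → ZMod q) ×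
      (Fin i.1 → ZMod q) × (Fin i.1 → ZMod q)) →
      ((Fin i.1 → ZMod q) × (Fin i.1 → ZMod q) × Fin M32 × Fin M13 × Fin M23 × ZMod q) :=
    (fun g =>
      ((fun j : Fin i.1 => tY1 C g.1 g.2.1 g.2.2.1 g.2.2.2.1 (ext0 g.2.2.2.2.2.1)
          (ext0 g.2.2.2.2.2.2) g.2.2.2.2.1 ⟨j.1, j.2.trans i.2⟩),
       (fun j : Fin i.1 => tY2 C g.1 g.2.1 g.2.2.1 g.2.2.2.1 (ext0 g.2.2.2.2.2.1)
          (ext0 g.2.2.2.2.2.2) g.2.2.2.2.1 ⟨j.1, j.2.trans i.2⟩),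
       g.2.2.2.1, g.1, g.2.1,
       (MAX C g.1 g.2.1 g.2.2.1 g.2.2.2.1 (ext0 g.2.2.2.2.2.1) (ext0 g.2.2.2.2.2.2)
          g.2.2.2.2.1 i).2.2)) with hΨdef
  -- MAX computed from the extended (zero-padded) noise agrees with the true MAX up to time i
  have hMAXeq : ∀ ω (m : Fin n), m.1 ≤ i.1 →
      MAX C (W13 ω) (W23 ω) (W31 ω) (W32 ω)
        (ext0 (fun j : Fin i.1 => Z1 ω ⟨j.1, j.2.trans i.2⟩))
        (ext0 (fun j : Fin i.1 => Z2 ω ⟨j.1, j.2.trans i.2⟩)) (Z3 ω) m =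
      MAX C (W13 ω) (W23 ω) (W31 ω) (W32 ω) (Z1 ω) (Z2 ω) (Z3 ω) m := by
    intro ω m hmi
    have h1 : ∀ j : Fin n, j.1 < m.1 →
        ext0 (fun j : Fin i.1 => Z1 ω ⟨j.1, j.2.trans i.2⟩) j = Z1 ω j := by
      intro j hj
      have hji : j.1 < i.1 := lt_of_lt_of_le hj hmi
      simp only [hext0, dif_pos hji]
    have h2 : ∀ j : Fin n, j.1 < m.1 →
        ext0 (fun j : Fin i.1 => Z2 ω ⟨j.1, j.2.trans i.2⟩) j = Z2 ω j := by
      intro j hj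
      have hji : j.1 < i.1 := lt_of_lt_of_le hj hmi
      simp only [hext0, dif_pos hji]
    have := MAX_congr C (W13 ω) (W23 ω) (W31 ω) (W32 ω)
      (ext0 (fun j : Fin i.1 => Z1 ω ⟨j.1, j.2.trans i.2⟩))
      (ext0 (fun j : Fin i.1 => Z2 ω ⟨j.1, j.2.trans i.2⟩)) (Z3 ω)
      (Z1 ω) (Z2 ω) (Z3 ω) m.1 m.2 h1 h2 (fun _ _ => rfl)
    simpa using this
  -- Ψ recovers Zm from G
  have hΨG : ∀ ω, Ψ (G ω) = Zm ω := by
    intro ω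
    simp only [hΨdef, hGdef, hZmdef]
    refine Prod.ext ?_ (Prod.ext ?_ (Prod.ext rfl (Prod.ext rfl (Prod.ext rfl ?_))))
    · funext j
      simp only [tY1]
      rw [hMAXeq ω ⟨j.1, j.2.trans i.2⟩ (le_of_lt j.2)]
      congr 1
      simp only [hext0, dif_pos j.2]
    · funext j
      simp only [tY2]
      rw [hMAXeq ω ⟨j.1, j.2.trans i.2⟩ (le_of_lt j.2)]
      congr 2
      · congr 1
        simp only [hext0, dif_pos j.2]
      · simp only [hext0, dif_pos j.2]
    · simp only []
      rw [hMAXeq ω i le_rfl]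
  -- translation between the (X = a) event and the (U = u) event, on {Zm = c}
  have key : ∀ x3 p r : ZMod q,
      ((x3 + p, x3 + p + r) = a) ↔ ((p, r) = (a.1 - x3, a.2 - a.1)) := by
    intro x3 p r
    simp only [Prod.ext_iff]
    constructor
    · rintro ⟨h1, h2⟩
      refine ⟨by rw [← h1]; ring, by rw [← h2, ← h1]; ring⟩
    · rintro ⟨h1, h2⟩
      subst h1; subst h2
      constructor <;> ring
  have hXU : ∀ ω, Zm ω = c →
      (X ω = a ↔ U ω = (a.1 - c.2.2.2.2.2, a.2 - a.1)) := by
    intro ω hc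
    have hx3 : (MAX C (W13 ω) (W23 ω) (W31 ω) (W32 ω) (Z1 ω) (Z2 ω) (Z3 ω) i).2.2 =
        c.2.2.2.2.2 := by
      have := congrArg (fun v => v.2.2.2.2.2) hc
      simpa [hZmdef] using this
    simp only [hXdef, hUdef, tY1, tY2]
    rw [hx3]
    exact key c.2.2.2.2.2 (Z1 ω i) (Z2 ω i)
  -- the four event identities
  have e4 : Zm ⁻¹' {c} = G ⁻¹' {g | Ψ g = c} := by
    ext ω
    simp only [Set.mem_preimage, Set.mem_singleton_iff, Set.mem_setOf_eq, hΨG ω]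
  have e3 : W31 ⁻¹' {b} ∩ Zm ⁻¹' {c} = G ⁻¹' {g | g.2.2.1 = b ∧ Ψ g = c} := by
    ext ω
    simp only [Set.mem_inter_iff, Set.mem_preimage, Set.mem_singleton_iff, Set.mem_setOf_eq]
    constructor
    · rintro ⟨h1, h2⟩
      exact ⟨h1, by rw [hΨG ω]; exact h2⟩
    · rintro ⟨h1, h2⟩
      exact ⟨h1, by rw [← hΨG ω]; exact h2⟩
  have e1 : X ⁻¹' {a} ∩ W31 ⁻¹' {b} ∩ Zm ⁻¹' {c} =
      U ⁻¹' {(a.1 - c.2.2.2.2.2, a.2 - a.1)} ∩ G ⁻¹' {g | g.2.2.1 = b ∧ Ψ g = c} := by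
    ext ω
    simp only [Set.mem_inter_iff, Set.mem_preimage, Set.mem_singleton_iff, Set.mem_setOf_eq]
    constructor
    · rintro ⟨⟨hx, hb⟩, hc⟩
      exact ⟨(hXU ω hc).mp hx, hb, by rw [hΨG ω]; exact hc⟩
    · rintro ⟨hu, hb, hΨc⟩
      have hc : Zm ω = c := by rw [← hΨG ω]; exact hΨc
      exact ⟨⟨(hXU ω hc).mpr hu, hb⟩, hc⟩
  have e2 : X ⁻¹' {a} ∩ Zm ⁻¹' {c} =
      U ⁻¹' {(a.1 - c.2.2.2.2.2, a.2 - a.1)} ∩ G ⁻¹' {g | Ψ g = c} := by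
    ext ω
    simp only [Set.mem_inter_iff, Set.mem_preimage, Set.mem_singleton_iff, Set.mem_setOf_eq]
    constructor
    · rintro ⟨hx, hc⟩
      exact ⟨(hXU ω hc).mp hx, by rw [hΨG ω]; exact hc⟩
    · rintro ⟨hu, hΨc⟩
      have hc : Zm ω = c := by rw [← hΨG ω]; exact hΨc
      exact ⟨(hXU ω hc).mpr hu, hc⟩
  rw [e1, e2, e3, e4, hUdef, hGdef]
  rw [indep_key μ W13 W23 W31 W32 Z1 Z2 Z3 hW13 hW23 hW31 hW32 hZ1 hZ2 hZ3 hiid1 hiid2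
      hindep12 hindep i _ {g | g.2.2.1 = b ∧ Ψ g = c},
    indep_key μ W13 W23 W31 W32 Z1 Z2 Z3 hW13 hW23 hW31 hW32 hZ1 hZ2 hZ3 hiid1 hiid2
      hindep12 hindep i _ {g | Ψ g = c}]
  ring

end
end
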